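/- Let u : ℤ⁴ → ℂ be nowhere zero and let μ⁽¹⁾, μ⁽²⁾, μ⁽³⁾, μ⁽⁰⁾ : ℤ → ℂ. Suppose u satisfies, for all l = (l₁,l₂,l₃,l₀) ∈ ℤ⁴, the full system: the three Q1_{δ=0} equations in cleared form (u(l)+u(l+e_i))(u(l+e_j)+u(l+e_i+e_j))·μ⁽ʲ⁾(l_j) = (u(l)+u(l+e_j))(u(l+e_i+e_j)+u(l+e_i))·μ⁽ⁱ⁾(l_i) for (i,j) ∈ {(1,2),(2,3),(3,1)}, and the three H1_{ε=0} equations (1/u(l)+1/u(l+e_k))(u(l+e₀)+u(l+e_k+e₀)) = −μ⁽ᵏ⁾(l_k)·μ⁽⁰⁾(l₀) for k ∈ {1,2,3}. Define ũ(l₁,l₂,l₃,l₀) = 1/u(l₁,l₂,l₃,−l₀) and parameters μ̃⁽⁰⁾(l) = μ⁽⁰⁾(−1−l), μ̃⁽¹⁾ = μ⁽¹⁾, μ̃⁽²⁾ = μ⁽²⁾, μ̃⁽³⁾ = μ⁽³⁾. Then ũ satisfies the same full system with parameters μ̃⁽¹⁾, μ̃⁽²⁾, μ̃⁽³⁾,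 μ̃⁽⁰⁾. -/
import Mathlib


/-- The multi-dimensionally consistent system on ℤ⁴: the three Q1_{δ=0}
equations (in cleared form) on the 2-faces in directions (1,2), (2,3), (3,1),
and the three H1_{ε=0} equations on the 2-faces in directions (k,0),
k = 1,2,3, with edge parameters μ⁽ⁱ⁾(l_i) and μ⁽⁰⁾(l₀). -/
def GarnierLatticeSystem (u : ℤ → ℤ → ℤ → ℤ → ℂ) (μ1 μ2 μ3 μ0 : ℤ → ℂ) : Prop :=
  (∀ l1 l2 l3 l0 : ℤ,
    (u l1 l2 l3 l0 + u (l1+1) l2 l3 l0)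
      * (u l1 (l2+1) l3 l0 + u (l1+1) (l2+1) l3 l0) * μ2 l2
    = (u l1 l2 l3 l0 + u l1 (l2+1) l3 l0)
      * (u (l1+1) (l2+1) l3 l0 + u (l1+1) l2 l3 l0) * μ1 l1)
  ∧ (∀ l1 l2 l3 l0 : ℤ,
    (u l1 l2 l3 l0 + u l1 (l2+1) l3 l0)
      * (u l1 l2 (l3+1) l0 + u l1 (l2+1) (l3+1) l0) * μ3 l3
    = (u l1 l2 l3 l0 + u l1 l2 (l3+1) l0)
      * (u l1 (l2+1) (l3+1) l0 + u l1 (l2+1) l3 l0) * μ2 l2)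
  ∧ (∀ l1 l2 l3 l0 : ℤ,
    (u l1 l2 l3 l0 + u l1 l2 (l3+1) l0)
      * (u (l1+1) l2 l3 l0 + u (l1+1) l2 (l3+1) l0) * μ1 l1
    = (u l1 l2 l3 l0 + u (l1+1) l2 l3 l0)
      * (u (l1+1) l2 (l3+1) l0 + u l1 l2 (l3+1) l0) * μ3 l3)
  ∧ (∀ l1 l2 l3 l0 : ℤ,
    (1 / u l1 l2 l3 l0 + 1 / u (l1+1) l2 l3 l0)
      * (u l1 l2 l3 (l0+1) + u (l1+1) l2 l3 (l0+1)) = -(μ1 l1 * μ0 l0))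
  ∧ (∀ l1 l2 l3 l0 : ℤ,
    (1 / u l1 l2 l3 l0 + 1 / u l1 (l2+1) l3 l0)
      * (u l1 l2 l3 (l0+1) + u l1 (l2+1) l3 (l0+1)) = -(μ2 l2 * μ0 l0))
  ∧ (∀ l1 l2 l3 l0 : ℤ,
    (1 / u l1 l2 l3 l0 + 1 / u l1 l2 (l3+1) l0)
      * (u l1 l2 l3 (l0+1) + u l1 l2 (l3+1) (l0+1)) = -(μ3 l3 * μ0 l0))

/-- The reflection w₀⁰ of the extended affine Weyl group symmetry W̃(A₁⁽¹⁾)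
acting in the distinguished lattice direction 0:
u ↦ 1/u(·,−l₀), μ⁽⁰⁾(l) ↦ μ⁽⁰⁾(−1−l) preserves the full system. -/
lemma q1_inv_aux (a b c d m2 m1 : ℂ) (ha : a ≠ 0) (hb : b ≠ 0) (hc : c ≠ 0) (hd : d ≠ 0)
    (h : (a + b) * (c + d) * m2 = (a + c) * (d + b) * m1) :
    (1/a + 1/b) * (1/c + 1/d) * m2 = (1/a + 1/c) * (1/d + 1/b) * m1 := by
  rw [div_add_div _ _ ha hb, div_add_div _ _ hc hd, div_add_div _ _ ha hc,
      div_add_div _ _ hd hb, div_mul_div_comm, div_mul_div_comm,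
      div_mul_eq_mul_div, div_mul_eq_mul_div,
      div_eq_div_iff (by exact mul_ne_zero (mul_ne_zero ha hb) (mul_ne_zero hc hd))
        (by exact mul_ne_zero (mul_ne_zero ha hc) (mul_ne_zero hd hb))]
  linear_combination (a * b * c * d) * h

theorem stmt_10 (u : ℤ → ℤ → ℤ → ℤ → ℂ) (μ1 μ2 μ3 μ0 : ℤ → ℂ)
    (hu : ∀ l1 l2 l3 l0 : ℤ, u l1 l2 l3 l0 ≠ 0)
    (hsys : GarnierLatticeSystem u μ1 μ2 μ3 μ0) :
    GarnierLatticeSystem (fun l1 l2 l3 l0 => 1 / u l1 l2 l3 (-l0))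
      μ1 μ2 μ3 (fun l => μ0 (-1 - l)) := by

  obtain ⟨h12, h23, h31, h10, h20, h30⟩ := hsys
  refine ⟨fun l1 l2 l3 l0 => ?_, fun l1 l2 l3 l0 => ?_, fun l1 l2 l3 l0 => ?_,
    fun l1 l2 l3 l0 => ?_, fun l1 l2 l3 l0 => ?_, fun l1 l2 l3 l0 => ?_⟩
  · have h := h12 l1 l2 l3 (-l0)
    exact q1_inv_aux _ _ _ _ _ _ (hu _ _ _ _) (hu _ _ _ _) (hu _ _ _ _) (hu _ _ _ _) h
  · have h := h23 l1 l2 l3 (-l0)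
    exact q1_inv_aux _ _ _ _ _ _ (hu _ _ _ _) (hu _ _ _ _) (hu _ _ _ _) (hu _ _ _ _) h
  · have h := h31 l1 l2 l3 (-l0)
    exact q1_inv_aux _ _ _ _ _ _ (hu _ _ _ _) (hu _ _ _ _) (hu _ _ _ _) (hu _ _ _ _) h
  · have h := h10 l1 l2 l3 (-1-l0)
    simp only [show (-1-l0)+1 = -l0 from by ring] at h
    simp only [one_div_one_div, show -(l0+1) = -1-l0 from by ring]
    linear_combination h
  · have h := h20 l1 l2 l3 (-1-l0)
    simp only [show (-1-l0)+1 = -l0 from by ring] at h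
    simp only [one_div_one_div, show -(l0+1) = -1-l0 from by ring]
    linear_combination h
  · have h := h30 l1 l2 l3 (-1-l0)
    simp only [show (-1-l0)+1 = -l0 from by ring] at h
    simp only [one_div_one_div, show -(l0+1) = -1-l0 from by ring]
    linear_combination h
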